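/- Suppose W(λ) = Σ_{k=1}^n b_k/(λ − λ_k) and Z(λ) = 1/(γλ) + Σ_{k=1}^n c_k/(λ − λ_k) are rational functions with distinct nonzero poles λ_1,…,λ_n such that λ_j + λ_k ≠ 0 for all j,k, satisfying the identity Z(λ) + Z(−λ) + W(λ)W(−λ) = 0 for all λ where defined. Then c_k = Σ_{m=1}^n b_m b_k/(λ_m + λ_k) for each k. -/

import Mathlib

/-- If `W(λ) = Σ b_k/(λ - λ_k)` and `Z(λ) = 1/(γλ) + Σ c_k/(λ - λ_k)` satisfy
`Z(λ) + Z(-λ) + W(λ)W(-λ) = 0` wherever defined, then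
`c_k = Σ_m b_m b_k/(λ_m + λ_k)`. -/
theorem residues_from_ZW_identity (n : ℕ) (lam b c : Fin n → ℝ) (γ : ℝ) (hγ : γ ≠ 0)
    (hdist : Function.Injective lam) (h0 : ∀ k, lam k ≠ 0)
    (hsum : ∀ j k, lam j + lam k ≠ 0)
    (hident : ∀ x : ℝ, x ≠ 0 → (∀ k, x ≠ lam k) → (∀ k, -x ≠ lam k) →
      ((1 / (γ * x) + ∑ k, c k / (x - lam k)) +
       (1 / (γ * (-x)) + ∑ k, c k / (-x - lam k)) +
       (∑ k, b k / (x - lam k)) * (∑ k, b k / (-x - lam k)) = 0)) :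
    ∀ k, c k = ∑ m, b m * b k / (lam m + lam k) := by
  intro k
  set a : ℝ := lam k with ha
  -- the regularized function
  set F : ℝ → ℝ := fun x =>
    c k + (x - a) * ((∑ m ∈ Finset.univ.erase k, c m / (x - lam m)) +
      ∑ m, c m / (-x - lam m)) +
    (b k + (x - a) * ∑ m ∈ Finset.univ.erase k, b m / (x - lam m)) *
      ∑ m, b m / (-x - lam m) with hF
  -- the bad set
  set S : Set ℝ := {0} ∪ Set.range lam ∪ Set.range (fun m => -lam m) with hS
  have hScnt : S.Countable := by
    apply Set.Countable.union
    apply Set.Countable.union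
    · exact Set.countable_singleton 0
    · exact Set.countable_range _
    · exact Set.countable_range _
  -- F vanishes off S
  have hFzero : ∀ x ∈ Sᶜ, F x = 0 := by
    intro x hx
    simp only [hS, Set.compl_union, Set.mem_inter_iff, Set.mem_compl_iff,
      Set.mem_singleton_iff, Set.mem_range, not_exists] at hx
    obtain ⟨⟨hx0, hx1⟩, hx2⟩ := hx
    have hx1' : ∀ m, x ≠ lam m := fun m h => hx1 m h.symm
    have hx2' : ∀ m, -x ≠ lam m := fun m h => hx2 m (by linarith)
    have H := hident x hx0 hx1' hx2'
    have hc : 1 / (γ * x) + 1 / (γ * (-x)) = 0 := by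
      field_simp
      ring
    have H' : (∑ m, c m / (x - lam m)) + (∑ m, c m / (-x - lam m)) +
        (∑ m, b m / (x - lam m)) * (∑ m, b m / (-x - lam m)) = 0 := by
      linarith [H, hc]
    have hxa : x - a ≠ 0 := sub_ne_zero.mpr (hx1' k)
    have hsplitc : (∑ m, c m / (x - lam m)) =
        c k / (x - a) + ∑ m ∈ Finset.univ.erase k, c m / (x - lam m) :=
      (Finset.add_sum_erase _ (fun m => c m / (x - lam m)) (Finset.mem_univ k)).symm
    have hsplitb : (∑ m, b m / (x - lam m)) =
        b k / (x - a) + ∑ m ∈ Finset.univ.erase k, b m / (x - lam m) :=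
      (Finset.add_sum_erase _ (fun m => b m / (x - lam m)) (Finset.mem_univ k)).symm
    have : F x = (x - a) * ((∑ m, c m / (x - lam m)) + (∑ m, c m / (-x - lam m)) +
        (∑ m, b m / (x - lam m)) * (∑ m, b m / (-x - lam m))) := by
      rw [hsplitc, hsplitb, hF]
      field_simp
      ring
    rw [this, H', mul_zero]
  -- F is continuous at a
  have hcont : ContinuousAt F a := by
    have h1 : ∀ m ∈ Finset.univ.erase k,
        ContinuousAt (fun x : ℝ => c m / (x - lam m)) a := by
      intro m hm
      have hne : a - lam m ≠ 0 := by
        rw [Finset.mem_erase] at hm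
        exact sub_ne_zero.mpr (fun h => hm.1 (hdist h.symm))
      exact continuousAt_const.div (continuousAt_id.sub continuousAt_const) hne
    have h2 : ∀ m ∈ Finset.univ.erase k,
        ContinuousAt (fun x : ℝ => b m / (x - lam m)) a := by
      intro m hm
      have hne : a - lam m ≠ 0 := by
        rw [Finset.mem_erase] at hm
        exact sub_ne_zero.mpr (fun h => hm.1 (hdist h.symm))
      exact continuousAt_const.div (continuousAt_id.sub continuousAt_const) hne
    have h3 : ∀ (d : Fin n → ℝ), ContinuousAt (fun x : ℝ => ∑ m, d m / (-x - lam m)) a := by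
      intro d
      refine tendsto_finset_sum _ (fun m _ => ?_)
      have hne : -a - lam m ≠ 0 := by
        have := hsum m k
        intro h; apply this; linarith [sub_eq_zero.mp h]
      exact continuousAt_const.div ((continuousAt_id.neg).sub continuousAt_const) hne
    have hs1 : ContinuousAt (fun x : ℝ => ∑ m ∈ Finset.univ.erase k, c m / (x - lam m)) a :=
      tendsto_finset_sum _ h1
    have hs2 : ContinuousAt (fun x : ℝ => ∑ m ∈ Finset.univ.erase k, b m / (x - lam m)) a :=
      tendsto_finset_sum _ h2
    exact (continuousAt_const.add
      (((continuousAt_id.sub continuousAt_const)).mul (hs1.add (h3 c)))).add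
      ((continuousAt_const.add ((continuousAt_id.sub continuousAt_const).mul hs2)).mul (h3 b))
  -- hence F a = 0
  have hdense : Dense Sᶜ := hScnt.dense_compl ℝ
  have hmem : a ∈ closure Sᶜ := hdense a
  have hnb : (nhdsWithin a Sᶜ).NeBot := mem_closure_iff_nhdsWithin_neBot.mp hmem
  have hFa : F a = 0 := by
    have t1 : Filter.Tendsto F (nhdsWithin a Sᶜ) (nhds (F a)) :=
      hcont.continuousWithinAt.tendsto
    have t2 : Filter.Tendsto F (nhdsWithin a Sᶜ) (nhds 0) := by
      refine Filter.Tendsto.congr' ?_ tendsto_const_nhds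
      filter_upwards [self_mem_nhdsWithin] with x hx
      exact (hFzero x hx).symm
    exact tendsto_nhds_unique t1 t2
  -- unfold F a
  have hFa' : c k + b k * ∑ m, b m / (-a - lam m) = 0 := by
    have := hFa
    rw [hF] at this
    simpa using this
  have hterm : ∀ m : Fin n, b m * b k / (lam m + lam k) = -(b k * (b m / (-a - lam m))) := by
    intro m
    rw [ha]
    have h2 : -lam k - lam m = -(lam m + lam k) := by ring
    rw [h2, div_neg]
    ring
  calc c k = -(b k * ∑ m, b m / (-a - lam m)) := by linarith
    _ = ∑ m, -(b k * (b m / (-a - lam m))) := by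
        rw [Finset.mul_sum, ← Finset.sum_neg_distrib]
    _ = ∑ m, b m * b k / (lam m + lam k) := by
        exact Finset.sum_congr rfl (fun m _ => (hterm m).symm)
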